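/- Let G be a group and σ an involutive anti-automorphism of G. Let δ > 0 and f, g : G → ℂ satisfy |f(x*y) + f(x*σ(y)) − 2·f(x)·g(y)| ≤ δ for all x, y ∈ G. If g is unbounded and f ≠ 0, then f satisfies f(x*y) + f(x*σ(y)) = 2·f(x)·g(y) for all x, y, and moreover g satisfies g(x*y) + g(y*x) + g(σ(y)*x) + g(x*σ(y)) = 4·g(x)·g(y) for all x, y. -/

import Mathlib

theorem stmt_5 (G : Type*) [Group G] (σ : G → G)
    (hanti : ∀ x y : G, σ (x * y) = σ y * σ x) (hinv : ∀ x : G, σ (σ x) = x)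
    (δ : ℝ) (hδ : 0 < δ) (f g : G → ℂ)
    (h : ∀ x y : G, ‖f (x * y) + f (x * σ y) - 2 * f x * g y‖ ≤ δ)
    (hg : ∀ M : ℝ, ∃ z : G, M < ‖g z‖) (hf : f ≠ 0) :
    (∀ x y : G, f (x * y) + f (x * σ y) = 2 * f x * g y) ∧
    (∀ x y : G, g (x * y) + g (y * x) + g (σ y * x) + g (x * σ y) = 4 * g x * g y) := by
  set E : G → G → ℂ := fun x y => f (x * y) + f (x * σ y) - 2 * f x * g y with hE
  have hEb : ∀ x y : G, ‖E x y‖ ≤ δ := by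
    intro x y; rw [hE]; simpa using h x y
  -- key algebraic identity
  have key : ∀ x y z : G,
      2 * f x * ((g (y*z) + g (y*σ z) + g (σ y*z) + g (σ y*σ z)) - 4 * g y * g z)
      = (E (x*y) z + E (x*σ y) z + E (x*z) y + E (x*σ z) y
        - E x (y*z) - E x (y*σ z) - E x (σ y*z) - E x (σ y*σ z))
        + 2 * g z * E x y + 2 * g y * E x z := by
    intro x y z
    simp only [hE, hanti, hinv, mul_assoc]
    ring
  -- norm bound on RHS
  have hb : ∀ x y z : G,
      ‖2 * f x * ((g (y*z) + g (y*σ z) + g (σ y*z) + g (σ y*σ z)) - 4 * g y * g z)‖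
        ≤ 8*δ + 2*‖g z‖*δ + 2*‖g y‖*δ := by
    intro x y z
    rw [key x y z]
    have t1 := hEb (x*y) z
    have t2 := hEb (x*σ y) z
    have t3 := hEb (x*z) y
    have t4 := hEb (x*σ z) y
    have t5 := hEb x (y*z)
    have t6 := hEb x (y*σ z)
    have t7 := hEb x (σ y*z)
    have t8 := hEb x (σ y*σ z)
    have u : ‖2 * g z * E x y‖ ≤ 2*‖g z‖*δ := by
      rw [norm_mul, norm_mul, Complex.norm_ofNat 2]
      have := hEb x y
      have h0 : (0:ℝ) ≤ ‖g z‖ := norm_nonneg _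
      nlinarith
    have v : ‖2 * g y * E x z‖ ≤ 2*‖g y‖*δ := by
      rw [norm_mul, norm_mul, Complex.norm_ofNat 2]
      have := hEb x z
      have h0 : (0:ℝ) ≤ ‖g y‖ := norm_nonneg _
      nlinarith
    calc ‖(E (x*y) z + E (x*σ y) z + E (x*z) y + E (x*σ z) y
        - E x (y*z) - E x (y*σ z) - E x (σ y*z) - E x (σ y*σ z))
        + 2 * g z * E x y + 2 * g y * E x z‖
        ≤ ‖E (x*y) z‖ + ‖E (x*σ y) z‖ + ‖E (x*z) y‖ + ‖E (x*σ z) y‖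
          + ‖E x (y*z)‖ + ‖E x (y*σ z)‖ + ‖E x (σ y*z)‖ + ‖E x (σ y*σ z)‖
          + ‖2 * g z * E x y‖ + ‖2 * g y * E x z‖ := by
            refine (norm_add_le _ _).trans ?_
            gcongr
            refine (norm_add_le _ _).trans ?_
            gcongr
            refine (norm_sub_le _ _).trans ?_
            gcongr
            refine (norm_sub_le _ _).trans ?_
            gcongr
            refine (norm_sub_le _ _).trans ?_
            gcongr
            refine (norm_sub_le _ _).trans ?_
            gcongr
            refine (norm_add_le _ _).trans ?_
            gcongr
            refine (norm_add_le _ _).trans ?_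
            gcongr
            exact norm_add_le _ _
      _ ≤ 8*δ + 2*‖g z‖*δ + 2*‖g y‖*δ := by linarith
  -- f is unbounded
  obtain ⟨x₀, hx₀⟩ : ∃ x₀, f x₀ ≠ 0 := Function.ne_iff.mp hf
  have hfx₀ : (0:ℝ) < ‖f x₀‖ := norm_pos_iff.mpr hx₀
  have hfub : ∀ M : ℝ, ∃ w : G, M < ‖f w‖ := by
    intro M
    obtain ⟨z, hz⟩ := hg ((M + M + δ) / (2 * ‖f x₀‖))
    rw [div_lt_iff₀ (by positivity)] at hz
    have h1 : ‖2 * f x₀ * g z‖ ≤ ‖f (x₀*z) + f (x₀*σ z)‖ + δ := by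
      have h2 : ‖2 * f x₀ * g z‖ - ‖f (x₀*z) + f (x₀*σ z)‖ ≤ δ :=
        calc ‖2 * f x₀ * g z‖ - ‖f (x₀*z) + f (x₀*σ z)‖
            ≤ ‖2 * f x₀ * g z - (f (x₀*z) + f (x₀*σ z))‖ := norm_sub_norm_le _ _
          _ = ‖f (x₀*z) + f (x₀*σ z) - 2 * f x₀ * g z‖ := norm_sub_rev _ _
          _ ≤ δ := hEb x₀ z
      linarith
    have h3 : ‖2 * f x₀ * g z‖ = 2 * ‖f x₀‖ * ‖g z‖ := by
      rw [norm_mul, norm_mul, Complex.norm_ofNat 2]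
    by_contra hM
    push_neg at hM
    have h4 : ‖f (x₀*z) + f (x₀*σ z)‖ ≤ ‖f (x₀*z)‖ + ‖f (x₀*σ z)‖ := norm_add_le _ _
    have h5 := hM (x₀*z)
    have h6 := hM (x₀*σ z)
    nlinarith [norm_nonneg (g z)]
  -- the g-equation in P-form
  have hC : ∀ y z : G,
      g (y*z) + g (y*σ z) + g (σ y*z) + g (σ y*σ z) = 4 * g y * g z := by
    intro y z
    by_contra hC0
    set C : ℂ := (g (y*z) + g (y*σ z) + g (σ y*z) + g (σ y*σ z)) - 4 * g y * g z with hCdef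
    have hCne : C ≠ 0 := sub_ne_zero.mpr hC0
    have hCpos : (0:ℝ) < ‖C‖ := norm_pos_iff.mpr hCne
    obtain ⟨w, hw⟩ := hfub ((8*δ + 2*‖g z‖*δ + 2*‖g y‖*δ) / (2 * ‖C‖))
    rw [div_lt_iff₀ (by positivity)] at hw
    have := hb w y z
    rw [norm_mul, norm_mul, Complex.norm_ofNat 2] at this
    nlinarith
  -- E = 0
  have hE0 : ∀ x y : G, E x y = 0 := by
    intro x y
    by_contra hne
    have hpos : (0:ℝ) < ‖E x y‖ := norm_pos_iff.mpr hne
    obtain ⟨z, hz⟩ := hg ((8*δ + 2*‖g y‖*δ) / (2 * ‖E x y‖))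
    rw [div_lt_iff₀ (by positivity)] at hz
    have hk := key x y z
    rw [sub_eq_zero.mpr (hC y z), mul_zero] at hk
    have h1 : 2 * g z * E x y =
        - (E (x*y) z + E (x*σ y) z + E (x*z) y + E (x*σ z) y
        - E x (y*z) - E x (y*σ z) - E x (σ y*z) - E x (σ y*σ z)) - 2 * g y * E x z := by
      linear_combination -hk
    have h2 : ‖2 * g z * E x y‖ ≤ 8*δ + 2*‖g y‖*δ := by
      rw [h1]
      have t1 := hEb (x*y) z
      have t2 := hEb (x*σ y) z
      have t3 := hEb (x*z) y
      have t4 := hEb (x*σ z) y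
      have t5 := hEb x (y*z)
      have t6 := hEb x (y*σ z)
      have t7 := hEb x (σ y*z)
      have t8 := hEb x (σ y*σ z)
      have v : ‖2 * g y * E x z‖ ≤ 2*‖g y‖*δ := by
        rw [norm_mul, norm_mul, Complex.norm_ofNat 2]
        have := hEb x z
        have h0 : (0:ℝ) ≤ ‖g y‖ := norm_nonneg _
        nlinarith
      calc ‖-(E (x*y) z + E (x*σ y) z + E (x*z) y + E (x*σ z) y
        - E x (y*z) - E x (y*σ z) - E x (σ y*z) - E x (σ y*σ z)) - 2 * g y * E x z‖
          ≤ ‖E (x*y) z + E (x*σ y) z + E (x*z) y + E (x*σ z) y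
            - E x (y*z) - E x (y*σ z) - E x (σ y*z) - E x (σ y*σ z)‖
            + ‖2 * g y * E x z‖ := by
              refine (norm_sub_le _ _).trans ?_
              rw [norm_neg]
        _ ≤ (‖E (x*y) z‖ + ‖E (x*σ y) z‖ + ‖E (x*z) y‖ + ‖E (x*σ z) y‖
            + ‖E x (y*z)‖ + ‖E x (y*σ z)‖ + ‖E x (σ y*z)‖ + ‖E x (σ y*σ z)‖)
            + ‖2 * g y * E x z‖ := by
              gcongr
              refine (norm_sub_le _ _).trans ?_
              gcongr
              refine (norm_sub_le _ _).trans ?_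
              gcongr
              refine (norm_sub_le _ _).trans ?_
              gcongr
              refine (norm_sub_le _ _).trans ?_
              gcongr
              refine (norm_add_le _ _).trans ?_
              gcongr
              refine (norm_add_le _ _).trans ?_
              gcongr
              exact norm_add_le _ _
        _ ≤ 8*δ + 2*‖g y‖*δ := by linarith
    rw [norm_mul, norm_mul, Complex.norm_ofNat 2] at h2
    nlinarith
  have hWilson : ∀ x y : G, f (x * y) + f (x * σ y) = 2 * f x * g y := by
    intro x y
    have := hE0 x y
    rw [hE, sub_eq_zero] at this
    exact this
  refine ⟨hWilson, ?_⟩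
  -- g ∘ σ = g
  have hgσ : ∀ y : G, g (σ y) = g y := by
    intro y
    have h1 := hWilson x₀ (σ y)
    rw [hinv] at h1
    have h2 := hWilson x₀ y
    have : 2 * f x₀ * g (σ y) = 2 * f x₀ * g y := by
      rw [← h1, ← h2]; ring
    exact mul_left_cancel₀ (by simpa using hx₀) this
  intro x y
  have := hC x y
  have e1 : g (σ x * y) = g (σ y * x) := by
    rw [← hgσ (σ x * y), hanti, hinv]
  have e2 : g (σ x * σ y) = g (y * x) := by
    rw [← hgσ (σ x * σ y), hanti, hinv, hinv]
  rw [e1, e2] at this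
  linear_combination this
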